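/- arXiv:1709.06432 — 4 statements merged into one kernel-verified Lean document; each statement's English description precedes it below -/
import Mathlib

section
/- Let p be a prime, e a nonnegative integer, and B(X), R(X) polynomials over F_p with B monic of degree e and deg(R) < e. Let u be a positive integer and K a nonnegative integer. Consider the integers n with K·p^{u+e} ≤ n < (K+1)·p^{u+e}, each identified with its associated polynomial n(X) over F_p (coefficients being the base-p digits of n). Then the set of such polynomials n(X) satisfying n(X) ≡ R(X) (mod B(X)) is exactly {(r(X) + X^u·C(X))·B(X) + R(X) : deg(r) < u}, for some fixed polynomial C(X) depending only on K, B, R, u (with r ranging over all polynomials of degree less than u). -/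
open scoped Classical ENNReal
open Polynomial

noncomputable section

namespace KH

/-- The field `F_p((X⁻¹))` of formal Laurent series in `X⁻¹` over `ZMod p`,
modeled as Hahn series over `ℤ`: the coefficient at `i : ℤ` is the coefficient of `X^{-i}`. -/
abbrev LS (p : ℕ) := HahnSeries ℤ (ZMod p)

/-- The element `X` of `F_p((X⁻¹))` (exponent `-1` in `X⁻¹`). -/
def Xls (p : ℕ) : LS p := HahnSeries.single (-1 : ℤ) 1

/-- `ν(L) = -w` where `w` is the order of `L` (`ν(0) = 0` by convention). -/
def nu {p : ℕ} (L : LS p) : ℤ := -(HahnSeries.order L)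

/-- Embedding of polynomials `F_p[X] → F_p((X⁻¹))`, sending `X` to `Xls`. -/
def P2L (p : ℕ) [Fact p.Prime] : Polynomial (ZMod p) →+* LS p :=
  (Polynomial.aeval (Xls p)).toRingHom

/-- The fractional part `{L} = ∑_{i ≥ 1} a_i X^{-i}`. -/
def frac {p : ℕ} (L : LS p) : LS p where
  coeff i := if 1 ≤ i then L.coeff i else 0
  isPWO_support' := L.isPWO_support'.mono (by
    intro i hi
    by_cases h : (1:ℤ) ≤ i <;> simp [HahnSeries.support, h] at hi ⊢ <;> tauto)

/-- Continued fraction remainders: `cfRem L 0 = L`, `cfRem L (n+1) = 1/{cfRem L n}`. -/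
def cfRem {p : ℕ} [Fact p.Prime] (L : LS p) : ℕ → LS p
  | 0 => L
  | n + 1 => (frac (cfRem L n))⁻¹

/-- The `n`-th continued fraction partial quotient of `L` (as a Laurent series; it is the
polynomial part of the `n`-th remainder). -/
def cfA {p : ℕ} [Fact p.Prime] (L : LS p) (n : ℕ) : LS p :=
  cfRem L n - frac (cfRem L n)

/-- The degree of the `n`-th partial quotient. -/
def degA {p : ℕ} [Fact p.Prime] (L : LS p) (n : ℕ) : ℤ := nu (cfA L n)

/-- Denominators `Q_h` of the convergents of `L`. -/
def cfQ {p : ℕ} [Fact p.Prime] (L : LS p) : ℕ → LS p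
  | 0 => 1
  | 1 => cfA L 1
  | n + 2 => cfA L (n + 2) * cfQ L (n + 1) + cfQ L n

/-- Numerators `P_h` of the convergents of `L`. -/
def cfP {p : ℕ} [Fact p.Prime] (L : LS p) : ℕ → LS p
  | 0 => cfA L 0
  | 1 => cfA L 1 * cfA L 0 + 1
  | n + 2 => cfA L (n + 2) * cfP L (n + 1) + cfP L n

/-- `d_h = deg Q_h`. -/
def dQ {p : ℕ} [Fact p.Prime] (L : LS p) (h : ℕ) : ℤ := nu (cfQ L h)

/-- Evaluation at `X = p` of (the fractional part of) a Laurent series: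
`∑_{i ≥ 1} a_i p^{-i}` with digits `a_i ∈ {0, …, p-1}`. -/
def evalAtP {p : ℕ} (L : LS p) : ℝ :=
  ∑' i : ℕ, ((L.coeff ((i : ℤ) + 1)).val : ℝ) / (p : ℝ) ^ (i + 1)

/-- The polynomial over `F_p` associated with `n ∈ ℕ`, whose coefficients are the
base-`p` digits of `n`. -/
def nPoly (p : ℕ) (n : ℕ) : Polynomial (ZMod p) :=
  ∑ i ∈ Finset.range (n + 1), Polynomial.C ((n / p ^ i % p : ℕ) : ZMod p) * Polynomial.X ^ i

/-- The `n`-th point of the digital Kronecker sequence associated with `L`. -/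
def kron (p : ℕ) [Fact p.Prime] (L : LS p) (n : ℕ) : ℝ :=
  evalAtP (frac (P2L p (nPoly p n) * L))

/-- The `i`-th digit of `n(X)` in base `b(X)`. -/
def haltonDigit (p : ℕ) [Fact p.Prime] (b : Polynomial (ZMod p)) (n i : ℕ) :
    Polynomial (ZMod p) :=
  (nPoly p n /ₘ b ^ i) %ₘ b

/-- Evaluation of a polynomial over `F_p` at `p` (digits in `{0,…,p-1}`). -/
def polyEvalNat (p : ℕ) (a : Polynomial (ZMod p)) : ℕ :=
  ∑ i ∈ Finset.range (a.natDegree + 1), (a.coeff i).val * p ^ i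

/-- The `n`-th point of the van der Corput sequence in base `b(X)` over `F_p`. -/
def vdc (p : ℕ) [Fact p.Prime] (b : Polynomial (ZMod p)) (n : ℕ) : ℝ :=
  ∑' i : ℕ, (polyEvalNat p (haltonDigit p b n i) : ℝ) / (p : ℝ) ^ (b.natDegree * (i + 1))

/-- Number of indices `n < N` with `z n` in the box `∏ [a i, b i)`. -/
def countIn (d : ℕ) (z : ℕ → Fin d → ℝ) (N : ℕ) (a b : Fin d → ℝ) : ℕ :=
  ((Finset.range N).filter fun n => ∀ i, a i ≤ z n i ∧ z n i < b i).card

/-- The (extreme) discrepancy of the first `N` points of `z` in `[0,1)^d`. -/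
def disc (d : ℕ) (z : ℕ → Fin d → ℝ) (N : ℕ) : ℝ :=
  sSup { r | ∃ a b : Fin d → ℝ, (∀ i, 0 ≤ a i ∧ a i ≤ b i ∧ b i ≤ 1) ∧
    r = |(countIn d z N a b : ℝ) / N - ∏ i, (b i - a i)| }

/-- The star discrepancy of the first `N` points of `z` in `[0,1)^d`. -/
def starDisc (d : ℕ) (z : ℕ → Fin d → ℝ) (N : ℕ) : ℝ :=
  sSup { r | ∃ b : Fin d → ℝ, (∀ i, 0 < b i ∧ b i ≤ 1) ∧
    r = |(countIn d z N (fun _ => 0) b : ℝ) / N - ∏ i, b i| }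

/-- The Laurent series `∑_{i ≥ 1} a_{i-1} X^{-i}` associated with a coefficient
sequence `a : ℕ → ZMod p`; this identifies `H = {L : ν(L) < 0}` with `ℕ → ZMod p`. -/
def toLS (p : ℕ) (a : ℕ → ZMod p) : LS p where
  coeff i := if h : 1 ≤ i then a (i - 1).toNat else 0
  isPWO_support' := by
    have : BddBelow {i : ℤ | (if h : 1 ≤ i then a (i - 1).toNat else 0) ≠ 0} := by
      refine ⟨1, fun i hi => ?_⟩
      by_cases h : (1:ℤ) ≤ i
      · exact h
      · simp [h] at hi
    exact (Set.isPWO_iff_isWF.mpr this.wellFoundedOn_lt)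

instance : MeasurableSpace (ZMod p) := ⊤

/-- A `(t, m, s)`-net in base `p`. -/
def IsNet (p t m s : ℕ) (P : Fin (p ^ m) → Fin s → ℝ) : Prop :=
  t ≤ m ∧ ∀ (d a : Fin s → ℕ), (∑ i, d i) = m - t → (∀ i, a i < p ^ d i) →
    (Finset.univ.filter fun n => ∀ i,
      (a i : ℝ) / (p : ℝ) ^ d i ≤ P n i ∧ P n i < ((a i : ℝ) + 1) / (p : ℝ) ^ d i).card = p ^ t

/-- A `(t, s)`-sequence in base `p`. -/
def IsTSeq (p t s : ℕ) (z : ℕ → Fin s → ℝ) : Prop :=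
  ∀ m k : ℕ, t < m → IsNet p t m s fun n => z (k * p ^ m + (n : ℕ))


section helpers
variable {p : ℕ} (hp : 1 < p)
include hp

lemma sum_digits_lt (N : ℕ) (c : ℕ → ℕ) (hc : ∀ j, c j < p) :
    ∑ j ∈ Finset.range N, c j * p ^ j < p ^ N := by
  induction N with
  | zero => simp
  | succ N ih =>
    rw [Finset.sum_range_succ]
    have h1 : c N * p ^ N ≤ (p - 1) * p ^ N :=
      Nat.mul_le_mul_right _ (Nat.le_sub_one_of_lt (hc N))
    calc ∑ j ∈ Finset.range N, c j * p ^ j + c N * p ^ N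
        < p ^ N + (p - 1) * p ^ N := Nat.add_lt_add_of_lt_of_le ih h1
      _ = (1 + (p - 1)) * p ^ N := by ring
      _ = p * p ^ N := by congr 1; omega
      _ = p ^ (N + 1) := by rw [pow_succ, mul_comm]

lemma div_pow_mod (N : ℕ) (c : ℕ → ℕ) (hc : ∀ j, c j < p) (i : ℕ) :
    (∑ j ∈ Finset.range N, c j * p ^ j) / p ^ i % p = if i < N then c i else 0 := by
  induction N with
  | zero => simp
  | succ N ih =>
    rw [Finset.sum_range_succ]
    rcases lt_trichotomy i N with h | h | h
    · rw [if_pos (by omega)]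
      have e1 : c N * p ^ N = c N * p ^ (N - i) * p ^ i := by
        rw [mul_assoc, ← pow_add]; congr 2; omega
      rw [e1, Nat.add_mul_div_right _ _ (pow_pos (by omega : 0 < p) i)]
      have hNi : N - i = (N - i - 1) + 1 := by omega
      rw [hNi, pow_succ, ← mul_assoc, Nat.add_mul_mod_self_right]
      rw [ih, if_pos h]
    · subst h
      rw [Nat.add_mul_div_right _ _ (pow_pos (by omega : 0 < p) i),
        Nat.div_eq_of_lt (sum_digits_lt hp i c hc), if_pos (by omega)]
      simp [Nat.mod_eq_of_lt (hc i)]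
    · rw [if_neg (by omega)]
      have hlt : ∑ x ∈ Finset.range N, c x * p ^ x + c N * p ^ N < p ^ i := by
        calc _ = ∑ x ∈ Finset.range (N+1), c x * p ^ x := (Finset.sum_range_succ _ _).symm
          _ < p ^ (N + 1) := sum_digits_lt hp (N+1) c hc
          _ ≤ p ^ i := Nat.pow_le_pow_right (by omega) (by omega)
      rw [Nat.div_eq_of_lt hlt]; simp

lemma nPoly_coeff (n i : ℕ) :
    (nPoly p n).coeff i = ((n / p ^ i % p : ℕ) : ZMod p) := by
  rw [nPoly, Polynomial.finset_sum_coeff]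
  simp only [Polynomial.coeff_C_mul, Polynomial.coeff_X_pow, mul_ite, mul_one, mul_zero]
  rw [Finset.sum_ite_eq (Finset.range (n+1)) i]
  by_cases h : i ∈ Finset.range (n+1)
  · rw [if_pos h]
  · rw [if_neg h]
    have hi : n < p ^ i := by
      simp only [Finset.mem_range, not_lt] at h
      calc n < 2 ^ i :=
              lt_of_lt_of_le (Nat.lt_two_pow_self (n := n)) (Nat.pow_le_pow_right (by omega) (by omega))
        _ ≤ p ^ i := Nat.pow_le_pow_left (by omega) i
    rw [Nat.div_eq_of_lt hi]
    simp

lemma nPoly_degree_lt (N m : ℕ) (hm : m < p ^ N) : (nPoly p m).degree < (N : ℕ) := by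
  rw [Polynomial.degree_lt_iff_coeff_zero]
  intro i hi
  rw [nPoly_coeff hp]
  have : m < p ^ i := lt_of_lt_of_le hm (Nat.pow_le_pow_right (by omega) (by exact_mod_cast hi))
  rw [Nat.div_eq_of_lt this]; simp

lemma nPoly_split (N K m : ℕ) (hm : m < p ^ N) :
    nPoly p (K * p ^ N + m) = nPoly p m + Polynomial.X ^ N * nPoly p K := by
  ext i
  rw [Polynomial.coeff_add, Polynomial.coeff_X_pow_mul', nPoly_coeff hp, nPoly_coeff hp]
  by_cases h : N ≤ i
  · have e1 : (K * p ^ N + m) / p ^ i = K / p ^ (i - N) := by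
      have : p ^ i = p ^ N * p ^ (i - N) := by rw [← pow_add]; congr 1; omega
      rw [this, ← Nat.div_div_eq_div_mul, mul_comm K,
        Nat.mul_add_div (pow_pos (by omega : 0 < p) N), Nat.div_eq_of_lt hm, Nat.add_zero]
    have e2 : m < p ^ i := lt_of_lt_of_le hm (Nat.pow_le_pow_right (by omega) h)
    rw [if_pos h, e1, Nat.div_eq_of_lt e2, nPoly_coeff hp]
    simp
  · push_neg at h
    have e1 : (K * p ^ N + m) / p ^ i % p = m / p ^ i % p := by
      have : K * p ^ N = K * p ^ (N - i) * p ^ i := by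
        rw [mul_assoc, ← pow_add]; congr 2; omega
      rw [this, mul_comm (K * p ^ (N-i)), Nat.mul_add_div (pow_pos (by omega : 0 < p) i)]
      have hNi : N - i = (N - i - 1) + 1 := by omega
      rw [add_comm, hNi, pow_succ, ← mul_assoc, Nat.add_mul_mod_self_right]
    rw [if_neg (by omega), e1]
    simp

lemma nPoly_surj (N : ℕ) (f : Polynomial (ZMod p)) (hf : f.degree < (N : ℕ)) :
    ∃ m < p ^ N, nPoly p m = f := by
  haveI : NeZero p := ⟨by omega⟩
  set c : ℕ → ℕ := fun i => (f.coeff i).val with hc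
  have hclt : ∀ j, c j < p := fun j => ZMod.val_lt _
  refine ⟨∑ j ∈ Finset.range N, c j * p ^ j, sum_digits_lt hp N c hclt, ?_⟩
  ext i
  rw [nPoly_coeff hp, div_pow_mod hp N c hclt]
  by_cases h : i < N
  · rw [if_pos h, hc]; simp [ZMod.natCast_val, ZMod.cast_id]
  · rw [if_neg h]
    have : f.coeff i = 0 :=
      Polynomial.coeff_eq_zero_of_degree_lt
        (lt_of_lt_of_le hf (by exact_mod_cast Nat.not_lt.mp h))
    simp [this]

end helpers

section degs
variable {p : ℕ} [Fact p.Prime]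

lemma deg_X_pow_mul_lt (f : Polynomial (ZMod p)) (c k : ℕ) (h : f.degree < (k : ℕ)) :
    (Polynomial.X ^ c * f).degree < ((c + k : ℕ) : WithBot ℕ) := by
  rcases eq_or_ne f 0 with rfl | hf
  · rw [mul_zero, Polynomial.degree_zero]; exact WithBot.bot_lt_coe _
  · have hnd : f.natDegree < k := by
      rw [Polynomial.degree_eq_natDegree hf] at h; exact_mod_cast h
    rw [Polynomial.degree_mul, Polynomial.degree_X_pow, Polynomial.degree_eq_natDegree hf]
    exact_mod_cast (show c + f.natDegree < c + k by omega)

lemma deg_mul_monic_lt {B : Polynomial (ZMod p)} (hB : B.Monic) {e : ℕ}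
    (hBe : B.natDegree = e) (f : Polynomial (ZMod p)) (k : ℕ) :
    (f * B).degree < ((k + e : ℕ) : WithBot ℕ) ↔ f.degree < (k : ℕ) := by
  rcases eq_or_ne f 0 with rfl | hf
  · simp only [zero_mul, Polynomial.degree_zero]
    exact ⟨fun _ => WithBot.bot_lt_coe _, fun _ => WithBot.bot_lt_coe _⟩
  · rw [Polynomial.degree_mul, Polynomial.degree_eq_natDegree hf,
      Polynomial.degree_eq_natDegree hB.ne_zero, hBe]
    constructor
    · intro h
      have : f.natDegree + e < k + e := by exact_mod_cast h
      exact_mod_cast (by omega : f.natDegree < k)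
    · intro h
      have : f.natDegree < k := by exact_mod_cast h
      exact_mod_cast (by omega : f.natDegree + e < k + e)

end degs

/-- Among the integers `n` in `[K·p^(u+e), (K+1)·p^(u+e))`, the associated
polynomials `n(X)` congruent to `R(X)` mod `B(X)` are exactly
`{(r(X) + X^u·C(X))·B(X) + R(X) : deg r < u}` for some fixed polynomial `C(X)`. -/
theorem statement0 (p : ℕ) [Fact p.Prime] (e : ℕ) (B R : Polynomial (ZMod p))
    (hB : B.Monic) (hBe : B.natDegree = e) (hR : R.degree < (e : ℕ))
    (u : ℕ) (hu : 0 < u) (K : ℕ) :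
    ∃ C : Polynomial (ZMod p),
      (nPoly p '' {n : ℕ | K * p ^ (u + e) ≤ n ∧ n < (K + 1) * p ^ (u + e) ∧
          B ∣ (nPoly p n - R)})
        = {q : Polynomial (ZMod p) | ∃ r : Polynomial (ZMod p), r.degree < (u : ℕ) ∧
            q = (r + Polynomial.X ^ u * C) * B + R} := by
  have hp : 1 < p := (Fact.out : p.Prime).one_lt
  have hBdeg : B.degree = (e : ℕ) := by rw [Polynomial.degree_eq_natDegree hB.ne_zero, hBe]
  set Kp := nPoly p K with hKp
  set C := (Polynomial.X ^ e * Kp) /ₘ B with hC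
  set S := (Polynomial.X ^ e * Kp) %ₘ B with hSdef
  have hBC : Polynomial.X ^ e * Kp = S + B * C := (Polynomial.modByMonic_add_div _ B).symm
  have hS : S.degree < (e : ℕ) := by rw [← hBdeg]; exact Polynomial.degree_modByMonic_lt _ hB
  have hRN : R.degree < ((u + e : ℕ) : WithBot ℕ) :=
    lt_of_lt_of_le hR (by exact_mod_cast Nat.le_add_left e u)
  have hexp : (K + 1) * p ^ (u + e) = K * p ^ (u + e) + p ^ (u + e) := by ring
  refine ⟨C, ?_⟩
  ext q
  simp only [Set.mem_image, Set.mem_setOf_eq]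
  constructor
  · rintro ⟨n, ⟨h1, h2, h3⟩, rfl⟩
    obtain ⟨m, hm, rfl⟩ : ∃ m, m < p ^ (u + e) ∧ n = K * p ^ (u + e) + m :=
      ⟨n - K * p ^ (u + e), by omega, by omega⟩
    rw [nPoly_split hp (u + e) K m hm] at h3 ⊢
    obtain ⟨t, ht⟩ := h3
    have h4 : nPoly p m + Polynomial.X ^ (u + e) * Kp - R = B * t := ht
    refine ⟨t - Polynomial.X ^ u * C, ?_, by linear_combination h4⟩
    rw [← deg_mul_monic_lt hB hBe]
    have key : (t - Polynomial.X ^ u * C) * B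
        = (nPoly p m - R) + Polynomial.X ^ u * S := by
      linear_combination (Polynomial.X ^ u) * hBC - h4
    rw [key]
    refine lt_of_le_of_lt (Polynomial.degree_add_le _ _)
      (max_lt (lt_of_le_of_lt (Polynomial.degree_sub_le _ _)
        (max_lt (nPoly_degree_lt hp (u + e) m hm) hRN)) (deg_X_pow_mul_lt S u e hS))
  · rintro ⟨r, hr, rfl⟩
    have hf : (r * B + R - Polynomial.X ^ u * S).degree < ((u + e : ℕ) : WithBot ℕ) := by
      refine lt_of_le_of_lt (Polynomial.degree_sub_le _ _)
        (max_lt ?_ (deg_X_pow_mul_lt S u e hS))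
      exact lt_of_le_of_lt (Polynomial.degree_add_le _ _)
        (max_lt ((deg_mul_monic_lt hB hBe r u).2 hr) hRN)
    obtain ⟨m, hm, hmf⟩ := nPoly_surj hp (u + e) _ hf
    refine ⟨K * p ^ (u + e) + m, ⟨Nat.le_add_right _ _, by omega, ?_⟩, ?_⟩
    · rw [nPoly_split hp (u + e) K m hm, hmf]
      exact ⟨r + Polynomial.X ^ u * C, by linear_combination (Polynomial.X ^ u) * hBC⟩
    · rw [nPoly_split hp (u + e) K m hm, hmf]
      linear_combination (Polynomial.X ^ u) * hBC

end KH
end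
end

section
/- Let L ∈ F_p((X^{-1})) have continued fraction expansion L = [A_0; A_1, A_2, ...] with all partial quotients A_d (d ≥ 1) of degree at most K(L) := sup_{d≥1} deg(A_d) < ∞, and let B ∈ F_p[X] be nonzero of degree e. Write the Laurent series of BL as BL = Σ_{i≥w} a_i X^{-i}. Then for every integer m > K(L) + e - 1, the vectors c_j = (a_j, a_{j+1}, ..., a_{j+m-1}) for j = 1, ..., m - (K(L)+e-1) are linearly independent over F_p. -/
open scoped Classical ENNReal
open Polynomial

noncomputable section

namespace KH

/-! ### Auxiliary development: continued fractions of Laurent series -/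

section Aux

open scoped Pointwise

variable {p : ℕ} [Fact p.Prime]

lemma coeff_frac (S : LS p) (i : ℤ) :
    (frac S).coeff i = if 1 ≤ i then S.coeff i else 0 := rfl

lemma order_eq_of {z : LS p} {a : ℤ} (h0 : z.coeff a ≠ 0)
    (hb : ∀ i, i < a → z.coeff i = 0) : z.order = a := by
  have hz : z ≠ 0 := fun h => h0 (by simp [h])
  refine le_antisymm (HahnSeries.order_le_of_coeff_ne_zero h0) ?_
  by_contra h
  push_neg at h
  exact (mt HahnSeries.coeff_order_eq_zero.mp hz) (hb _ h)

lemma one_le_order_frac {S : LS p} (h : frac S ≠ 0) : 1 ≤ (frac S).order := by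
  by_contra hlt
  push_neg at hlt
  have h2 := (mt HahnSeries.coeff_order_eq_zero.mp h)
  rw [coeff_frac, if_neg (not_le.mpr hlt)] at h2
  exact h2 rfl

lemma frac_zero : frac (0 : LS p) = 0 := by
  apply HahnSeries.coeff_injective
  funext i
  rw [coeff_frac]
  simp

/-- A "polynomial" element: all coefficients at positive indices vanish. -/
def IsP (x : LS p) : Prop := ∀ i : ℤ, 0 < i → x.coeff i = 0

lemma isP_one : IsP (1 : LS p) := by
  intro i hi
  rw [HahnSeries.coeff_one, if_neg (by omega)]

lemma isP_add {x y : LS p} (hx : IsP x) (hy : IsP y) : IsP (x + y) := by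
  intro i hi
  rw [HahnSeries.coeff_add, hx i hi, hy i hi, add_zero]

lemma isP_neg {x : LS p} (hx : IsP x) : IsP (-x) := by
  intro i hi
  rw [HahnSeries.coeff_neg, hx i hi, neg_zero]

lemma isP_sub {x y : LS p} (hx : IsP x) (hy : IsP y) : IsP (x - y) := by
  rw [sub_eq_add_neg]; exact isP_add hx (isP_neg hy)

lemma isP_mul {x y : LS p} (hx : IsP x) (hy : IsP y) : IsP (x * y) := by
  intro i hi
  by_contra h
  have hmem : i ∈ x.support + y.support :=
    HahnSeries.support_mul_subset (x := x) (y := y) h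
  obtain ⟨a, ha, b, hb, hab⟩ := Set.mem_add.mp hmem
  have ha' : a ≤ 0 := by
    by_contra hc; push_neg at hc; exact ha (hx a hc)
  have hb' : b ≤ 0 := by
    by_contra hc; push_neg at hc; exact hb (hy b hc)
  omega

lemma isP_negonepow (h : ℕ) : IsP ((-1 : LS p) ^ h) := by
  induction h with
  | zero => rw [pow_zero]; exact isP_one
  | succ n ih =>
    rw [show ((-1 : LS p)) ^ (n + 1) = -((-1) ^ n) from by ring]
    exact isP_neg ih

lemma negonepow_mul_self (h : ℕ) : ((-1 : LS p)) ^ h * (-1) ^ h = 1 := by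
  induction h with
  | zero => simp
  | succ n ih => linear_combination ih

lemma negonepow_ne_zero (h : ℕ) : ((-1 : LS p) ^ h) ≠ 0 :=
  pow_ne_zero _ (neg_ne_zero.mpr one_ne_zero)

lemma order_negonepow (h : ℕ) : ((-1 : LS p) ^ h).order = 0 := by
  induction h with
  | zero => rw [pow_zero, HahnSeries.order_one]
  | succ n ih =>
    rw [show ((-1 : LS p)) ^ (n + 1) = -((-1) ^ n) from by ring, HahnSeries.order_neg, ih]

lemma order_nonpos_of_isP {x : LS p} (h : IsP x) (hx : x ≠ 0) : x.order ≤ 0 := by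
  by_contra hlt
  push_neg at hlt
  exact (mt HahnSeries.coeff_order_eq_zero.mp hx) (h _ hlt)

lemma order_add_left {x y : LS p} (hx : x ≠ 0) (h : ∀ i, i ≤ x.order → y.coeff i = 0) :
    (x + y).order = x.order ∧ x + y ≠ 0 := by
  have h0 : (x + y).coeff x.order ≠ 0 := by
    rw [HahnSeries.coeff_add, h _ le_rfl, add_zero]
    exact (mt HahnSeries.coeff_order_eq_zero.mp hx)
  refine ⟨order_eq_of h0 (fun i hi => ?_), fun hz => h0 (by simp [hz])⟩
  rw [HahnSeries.coeff_add, HahnSeries.coeff_eq_zero_of_lt_order hi, h _ hi.le, add_zero]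

lemma order_inv {x : LS p} (hx : x ≠ 0) : (x⁻¹).order = -x.order := by
  have h1 : x * x⁻¹ = 1 := mul_inv_cancel₀ hx
  have h2 := HahnSeries.order_mul hx (inv_ne_zero hx)
  rw [h1, HahnSeries.order_one] at h2
  omega

lemma isP_cfA (L : LS p) (n : ℕ) : IsP (cfA L n) := by
  intro i hi
  rw [cfA, HahnSeries.coeff_sub, coeff_frac, if_pos (by omega), sub_self]

variable {L : LS p}

lemma fnz (hinf : ∀ d : ℕ, 1 ≤ d → 1 ≤ degA L d) (n : ℕ) : frac (cfRem L n) ≠ 0 := by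
  intro h
  have h1 : cfRem L (n + 1) = 0 := by rw [cfRem, h, inv_zero]
  have h2 : cfA L (n + 1) = 0 := by rw [cfA, h1, frac_zero, sub_zero]
  have h3 := hinf (n + 1) (by omega)
  rw [degA, h2, nu, HahnSeries.order_zero] at h3
  omega

lemma cfA_ne_zero (hinf : ∀ d : ℕ, 1 ≤ d → 1 ≤ degA L d) {d : ℕ} (hd : 1 ≤ d) :
    cfA L d ≠ 0 := by
  intro h
  have h3 := hinf d hd
  rw [degA, h, nu, HahnSeries.order_zero] at h3
  omega

lemma order_cfA {d : ℕ} : (cfA L d).order = -(degA L d) := by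
  rw [degA, nu]; ring

lemma order_f (hinf : ∀ d : ℕ, 1 ≤ d → 1 ≤ degA L d) (n : ℕ) :
    (frac (cfRem L n)).order = degA L (n + 1) := by
  have hf := fnz hinf n
  have hfo := one_le_order_frac hf
  have hr : cfRem L (n + 1) = (frac (cfRem L n))⁻¹ := rfl
  have hrnz : cfRem L (n + 1) ≠ 0 := by rw [hr]; exact inv_ne_zero hf
  have hro : (cfRem L (n + 1)).order = -(frac (cfRem L n)).order := by
    rw [hr, order_inv hf]
  have key := order_add_left (x := cfRem L (n + 1)) (y := -(frac (cfRem L (n + 1)))) hrnz ?_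
  · have hA : cfA L (n + 1) = cfRem L (n + 1) + -(frac (cfRem L (n + 1))) := by
      rw [cfA]; ring
    have h4 : (cfA L (n + 1)).order = (cfRem L (n + 1)).order := by rw [hA, key.1]
    have h5 := order_cfA (L := L) (d := n + 1)
    rw [h4, hro] at h5
    omega
  · intro i hi
    rw [hro] at hi
    rw [HahnSeries.coeff_neg, coeff_frac, if_neg (by omega), neg_zero]

lemma ddeg_ge (hinf : ∀ d : ℕ, 1 ≤ d → 1 ≤ degA L d) (h : ℕ) :
    (h : ℤ) ≤ ∑ i ∈ Finset.range h, degA L (i + 1) := by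
  induction h with
  | zero => simp
  | succ k ih =>
    rw [Finset.sum_range_succ]
    have := hinf (k + 1) (by omega)
    push_cast
    omega

lemma prod_f (hinf : ∀ d : ℕ, 1 ≤ d → 1 ≤ degA L d) (n : ℕ) :
    (∏ i ∈ Finset.range n, frac (cfRem L i)) ≠ 0 ∧
      (∏ i ∈ Finset.range n, frac (cfRem L i)).order
        = ∑ i ∈ Finset.range n, degA L (i + 1) := by
  induction n with
  | zero => simp [HahnSeries.order_one]
  | succ k ih =>
    rw [Finset.prod_range_succ, Finset.sum_range_succ]
    refine ⟨mul_ne_zero ih.1 (fnz hinf k), ?_⟩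
    rw [HahnSeries.order_mul ih.1 (fnz hinf k), ih.2, order_f hinf k]

lemma Eprod (hinf : ∀ d : ℕ, 1 ≤ d → 1 ≤ degA L d) : ∀ h : ℕ, cfQ L h * L - cfP L h
    = (-1) ^ h * ∏ i ∈ Finset.range (h + 1), frac (cfRem L i) := by
  have base0 : cfQ L 0 * L - cfP L 0
      = (-1 : LS p) ^ 0 * ∏ i ∈ Finset.range 1, frac (cfRem L i) := by
    rw [cfQ, cfP, cfA, Finset.prod_range_one]
    rw [show cfRem L 0 = L from rfl]
    ring
  have base1 : cfQ L 1 * L - cfP L 1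
      = (-1 : LS p) ^ 1 * ∏ i ∈ Finset.range 2, frac (cfRem L i) := by
    have hinv : (frac (cfRem L 0))⁻¹ * frac (cfRem L 0) = 1 := inv_mul_cancel₀ (fnz hinf 0)
    have hA1 : cfA L 1 = (frac (cfRem L 0))⁻¹ - frac (cfRem L 1) := rfl
    have hA0 : cfA L 0 = L - frac (cfRem L 0) := rfl
    rw [cfQ, cfP, Finset.prod_range_succ, Finset.prod_range_one, hA1, hA0]
    linear_combination hinv
  have step : ∀ n : ℕ,
      cfQ L n * L - cfP L n = (-1) ^ n * ∏ i ∈ Finset.range (n + 1), frac (cfRem L i) →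
      cfQ L (n + 1) * L - cfP L (n + 1)
        = (-1) ^ (n + 1) * ∏ i ∈ Finset.range (n + 2), frac (cfRem L i) →
      cfQ L (n + 2) * L - cfP L (n + 2)
        = (-1) ^ (n + 2) * ∏ i ∈ Finset.range (n + 3), frac (cfRem L i) := by
    intro n e1 e2
    have hq : cfQ L (n + 2) = cfA L (n + 2) * cfQ L (n + 1) + cfQ L n := rfl
    have hp : cfP L (n + 2) = cfA L (n + 2) * cfP L (n + 1) + cfP L n := rfl
    have hA : cfA L (n + 2) = (frac (cfRem L (n + 1)))⁻¹ - frac (cfRem L (n + 2)) := rfl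
    have hinv : (frac (cfRem L (n + 1)))⁻¹ * frac (cfRem L (n + 1)) = 1 :=
      inv_mul_cancel₀ (fnz hinf (n + 1))
    rw [hq, hp, hA]
    rw [show Finset.range (n + 3) = Finset.range (n + 2 + 1) from rfl, Finset.prod_range_succ,
      Finset.prod_range_succ]
    rw [Finset.prod_range_succ] at e2
    linear_combination ((frac (cfRem L (n + 1)))⁻¹ - frac (cfRem L (n + 2))) * e2 + e1 +
      ((-1 : LS p) ^ (n + 1) * (∏ i ∈ Finset.range (n + 1), frac (cfRem L i))) * hinv
  have key : ∀ h : ℕ,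
      (cfQ L h * L - cfP L h = (-1) ^ h * ∏ i ∈ Finset.range (h + 1), frac (cfRem L i)) ∧
      (cfQ L (h + 1) * L - cfP L (h + 1)
        = (-1) ^ (h + 1) * ∏ i ∈ Finset.range (h + 2), frac (cfRem L i)) := by
    intro h
    induction h with
    | zero => exact ⟨base0, base1⟩
    | succ n ih => exact ⟨ih.2, step n ih.1 ih.2⟩
  exact fun h => (key h).1

lemma Eord (hinf : ∀ d : ℕ, 1 ≤ d → 1 ≤ degA L d) (h : ℕ) :
    cfQ L h * L - cfP L h ≠ 0 ∧
    (cfQ L h * L - cfP L h).order = ∑ i ∈ Finset.range (h + 1), degA L (i + 1) := by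
  have hp := prod_f hinf (h + 1)
  rw [Eprod hinf h]
  refine ⟨mul_ne_zero (negonepow_ne_zero h) hp.1, ?_⟩
  rw [HahnSeries.order_mul (negonepow_ne_zero h) hp.1, order_negonepow, hp.2, zero_add]

lemma Qord (hinf : ∀ d : ℕ, 1 ≤ d → 1 ≤ degA L d) : ∀ h : ℕ, cfQ L h ≠ 0 ∧
    (cfQ L h).order = -(∑ i ∈ Finset.range h, degA L (i + 1)) := by
  have base0 : cfQ L 0 ≠ 0 ∧ (cfQ L 0).order = -(∑ i ∈ Finset.range 0, degA L (i + 1)) := by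
    rw [cfQ]
    simp [HahnSeries.order_one]
  have base1 : cfQ L 1 ≠ 0 ∧ (cfQ L 1).order = -(∑ i ∈ Finset.range 1, degA L (i + 1)) := by
    rw [cfQ, Finset.sum_range_one]
    exact ⟨cfA_ne_zero hinf (by omega), order_cfA⟩
  have step : ∀ n : ℕ,
      (cfQ L n ≠ 0 ∧ (cfQ L n).order = -(∑ i ∈ Finset.range n, degA L (i + 1))) →
      (cfQ L (n + 1) ≠ 0 ∧
        (cfQ L (n + 1)).order = -(∑ i ∈ Finset.range (n + 1), degA L (i + 1))) →
      (cfQ L (n + 2) ≠ 0 ∧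
        (cfQ L (n + 2)).order = -(∑ i ∈ Finset.range (n + 2), degA L (i + 1))) := by
    intro n ih1 ih2
    have hq : cfQ L (n + 2) = cfA L (n + 2) * cfQ L (n + 1) + cfQ L n := rfl
    have hAne := cfA_ne_zero hinf (d := n + 2) (by omega)
    have hxne : cfA L (n + 2) * cfQ L (n + 1) ≠ 0 := mul_ne_zero hAne ih2.1
    have e0 : degA L (n + 1 + 1) = degA L (n + 2) := rfl
    have e1 : (∑ i ∈ Finset.range (n + 2), degA L (i + 1))
        = (∑ i ∈ Finset.range (n + 1), degA L (i + 1)) + degA L (n + 1 + 1) :=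
      Finset.sum_range_succ _ _
    have e2 : (∑ i ∈ Finset.range (n + 1), degA L (i + 1))
        = (∑ i ∈ Finset.range n, degA L (i + 1)) + degA L (n + 1) :=
      Finset.sum_range_succ _ _
    have hxord : (cfA L (n + 2) * cfQ L (n + 1)).order
        = -(∑ i ∈ Finset.range (n + 2), degA L (i + 1)) := by
      rw [HahnSeries.order_mul hAne ih2.1, order_cfA, ih2.2]
      omega
    have hd1 := hinf (n + 1) (by omega)
    have hd2 := hinf (n + 2) (by omega)
    have key := order_add_left (x := cfA L (n + 2) * cfQ L (n + 1)) (y := cfQ L n) hxne ?_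
    · rw [hq]
      exact ⟨key.2, key.1.trans hxord⟩
    · intro i hi
      apply HahnSeries.coeff_eq_zero_of_lt_order
      rw [ih1.2]
      rw [hxord] at hi
      omega
  have key : ∀ h : ℕ,
      (cfQ L h ≠ 0 ∧ (cfQ L h).order = -(∑ i ∈ Finset.range h, degA L (i + 1))) ∧
      (cfQ L (h + 1) ≠ 0 ∧
        (cfQ L (h + 1)).order = -(∑ i ∈ Finset.range (h + 1), degA L (i + 1))) := by
    intro h
    induction h with
    | zero => exact ⟨base0, base1⟩
    | succ n ih => exact ⟨ih.2, step n ih.1 ih.2⟩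
  exact fun h => (key h).1

lemma isP_Q (L : LS p) : ∀ h : ℕ, IsP (cfQ L h) := by
  have key : ∀ h : ℕ, IsP (cfQ L h) ∧ IsP (cfQ L (h + 1)) := by
    intro h
    induction h with
    | zero =>
      constructor
      · rw [cfQ]; exact isP_one
      · rw [cfQ]; exact isP_cfA L 1
    | succ n ih =>
      refine ⟨ih.2, ?_⟩
      rw [show cfQ L (n + 2) = cfA L (n + 2) * cfQ L (n + 1) + cfQ L n from rfl]
      exact isP_add (isP_mul (isP_cfA L (n + 2)) ih.2) ih.1
  exact fun h => (key h).1

lemma isP_Pnum (L : LS p) : ∀ h : ℕ, IsP (cfP L h) := by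
  have key : ∀ h : ℕ, IsP (cfP L h) ∧ IsP (cfP L (h + 1)) := by
    intro h
    induction h with
    | zero =>
      constructor
      · rw [cfP]; exact isP_cfA L 0
      · rw [cfP]; exact isP_add (isP_mul (isP_cfA L 1) (isP_cfA L 0)) isP_one
    | succ n ih =>
      refine ⟨ih.2, ?_⟩
      rw [show cfP L (n + 2) = cfA L (n + 2) * cfP L (n + 1) + cfP L n from rfl]
      exact isP_add (isP_mul (isP_cfA L (n + 2)) ih.2) ih.1
  exact fun h => (key h).1

lemma det_cf (L : LS p) : ∀ h : ℕ,
    cfP L (h + 1) * cfQ L h - cfP L h * cfQ L (h + 1) = (-1) ^ h := by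
  intro h
  induction h with
  | zero =>
    rw [show cfP L 1 = cfA L 1 * cfA L 0 + 1 from rfl, show cfP L 0 = cfA L 0 from rfl,
      show cfQ L 0 = 1 from rfl, show cfQ L 1 = cfA L 1 from rfl]
    ring
  | succ n ih =>
    rw [show cfP L (n + 2) = cfA L (n + 2) * cfP L (n + 1) + cfP L n from rfl,
      show cfQ L (n + 2) = cfA L (n + 2) * cfQ L (n + 1) + cfQ L n from rfl]
    linear_combination -ih

/-- Key approximation lemma: if `Q` is a nonzero polynomial of degree `< d_{h+1}`,
then `frac (Q L)` is nonzero of order at most `d_{h+1}`. -/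
lemma approx (hinf : ∀ d : ℕ, 1 ≤ d → 1 ≤ degA L d) {Q : LS p}
    (hQP : IsP Q) (hQ0 : Q ≠ 0) (h : ℕ)
    (hdeg : -Q.order < ∑ i ∈ Finset.range (h + 1), degA L (i + 1)) :
    frac (Q * L) ≠ 0 ∧
      (frac (Q * L)).order ≤ ∑ i ∈ Finset.range (h + 1), degA L (i + 1) := by
  by_contra hcon
  rw [not_and_or] at hcon
  push_neg at hcon
  set d1 : ℤ := ∑ i ∈ Finset.range (h + 1), degA L (i + 1) with hd1
  set d2 : ℤ := ∑ i ∈ Finset.range (h + 2), degA L (i + 1) with hd2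
  have hd12 : d1 + 1 ≤ d2 := by
    have h1 := hinf (h + 1 + 1) (by omega)
    have e : d2 = d1 + degA L (h + 1 + 1) := by
      rw [hd2, hd1]
      exact Finset.sum_range_succ _ _
    omega
  have hd1pos : 0 < d1 := by
    have := ddeg_ge hinf (h + 1)
    omega
  set F := frac (Q * L) with hF
  set Pp := Q * L - F with hPp
  have hPpP : IsP Pp := by
    intro i hi
    rw [hPp, HahnSeries.coeff_sub, hF, coeff_frac, if_pos (by omega), sub_self]
  have hQ1' := Qord hinf (h + 1)
  have hE1' := Eord hinf (h + 1)
  have hE1ord : (cfQ L (h + 1) * L - cfP L (h + 1)).order = d2 := hE1'.2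
  have hdet := det_cf L h
  have hsq : (-1 : LS p) ^ h * (-1) ^ h = 1 := negonepow_mul_self h
  set u := (-1 : LS p) ^ h * (Q * cfP L (h + 1) - Pp * cfQ L (h + 1)) with hu
  set v := (-1 : LS p) ^ h * (Pp * cfQ L h - Q * cfP L h) with hv
  have huQ : u * cfQ L h + v * cfQ L (h + 1) = Q := by
    rw [hu, hv]
    linear_combination ((-1 : LS p) ^ h * Q) * hdet + Q * hsq
  have hualt : u = (-1 : LS p) ^ h *
      (cfQ L (h + 1) * F - Q * (cfQ L (h + 1) * L - cfP L (h + 1))) := by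
    rw [hu, hPp]
    ring
  have ht2ne : Q * (cfQ L (h + 1) * L - cfP L (h + 1)) ≠ 0 := mul_ne_zero hQ0 hE1'.1
  have ht2ord : 0 < (Q * (cfQ L (h + 1) * L - cfP L (h + 1))).order := by
    rw [HahnSeries.order_mul hQ0 hE1'.1, hE1ord]
    omega
  have hu0 : u = 0 := by
    by_contra hune
    have hwne : cfQ L (h + 1) * F - Q * (cfQ L (h + 1) * L - cfP L (h + 1)) ≠ 0 := by
      intro hw
      rw [hualt, hw, mul_zero] at hune
      exact hune rfl
    have hwpos : 0 < (cfQ L (h + 1) * F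
        - Q * (cfQ L (h + 1) * L - cfP L (h + 1))).order := by
      rcases hcon with hc | hc
      · rw [hc, mul_zero, zero_sub, HahnSeries.order_neg]
        exact ht2ord
      · have hFne : F ≠ 0 := by
          intro h0
          rw [h0, HahnSeries.order_zero] at hc
          omega
        have hx : cfQ L (h + 1) * F ≠ 0 := mul_ne_zero hQ1'.1 hFne
        have hxord : 0 < (cfQ L (h + 1) * F).order := by
          rw [HahnSeries.order_mul hQ1'.1 hFne, hQ1'.2]
          omega
        have hsum := HahnSeries.min_order_le_order_add
          (x := cfQ L (h + 1) * F)
          (y := -(Q * (cfQ L (h + 1) * L - cfP L (h + 1))))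
          (by rw [← sub_eq_add_neg]; exact hwne)
        rw [← sub_eq_add_neg, HahnSeries.order_neg] at hsum
        exact lt_of_lt_of_le (lt_min hxord ht2ord) hsum
    have hupos : 0 < u.order := by
      rw [hualt, HahnSeries.order_mul (negonepow_ne_zero h) hwne, order_negonepow, zero_add]
      exact hwpos
    have huP : IsP u := by
      rw [hu]
      exact isP_mul (isP_negonepow h)
        (isP_sub (isP_mul hQP (isP_Pnum L (h + 1))) (isP_mul hPpP (isP_Q L (h + 1))))
    exact (mt HahnSeries.coeff_order_eq_zero.mp hune) (huP _ hupos)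
  rw [hu0, zero_mul, zero_add] at huQ
  have hvne : v ≠ 0 := by
    intro hv0
    rw [hv0, zero_mul] at huQ
    exact hQ0 huQ.symm
  have hvP : IsP v := by
    rw [hv]
    exact isP_mul (isP_negonepow h)
      (isP_sub (isP_mul hPpP (isP_Q L h)) (isP_mul hQP (isP_Pnum L h)))
  have hvord : v.order ≤ 0 := order_nonpos_of_isP hvP hvne
  have hQordeq : Q.order = v.order + (cfQ L (h + 1)).order := by
    rw [← huQ, HahnSeries.order_mul hvne hQ1'.1]
  rw [hQ1'.2] at hQordeq
  omega

lemma exists_h (hinf : ∀ d : ℕ, 1 ≤ d → 1 ≤ degA L d)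
    (KL : ℕ) (hKle : ∀ d : ℕ, 1 ≤ d → degA L d ≤ (KL : ℤ))
    (n : ℤ) (hn : 0 ≤ n) :
    ∃ h : ℕ, n < ∑ i ∈ Finset.range (h + 1), degA L (i + 1) ∧
      (∑ i ∈ Finset.range (h + 1), degA L (i + 1)) ≤ n + KL := by
  have hex : ∃ k : ℕ, n < ∑ i ∈ Finset.range (k + 1), degA L (i + 1) := by
    refine ⟨n.toNat, ?_⟩
    have := ddeg_ge hinf (n.toNat + 1)
    push_cast at this
    omega
  refine ⟨Nat.find hex, Nat.find_spec hex, ?_⟩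
  rcases Nat.eq_zero_or_pos (Nat.find hex) with h0 | hpos
  · have h1 := hKle 1 le_rfl
    have e : ∑ i ∈ Finset.range (Nat.find hex + 1), degA L (i + 1) = degA L 1 := by
      rw [h0, Finset.sum_range_one]
    omega
  · obtain ⟨h', hh'⟩ : ∃ h', Nat.find hex = h' + 1 := ⟨Nat.find hex - 1, by omega⟩
    have hmin := Nat.find_min hex (m := h') (by omega)
    push_neg at hmin
    have h1 := hKle (Nat.find hex + 1) (by omega)
    have e : ∑ i ∈ Finset.range (Nat.find hex + 1), degA L (i + 1)
        = (∑ i ∈ Finset.range (h' + 1), degA L (i + 1)) + degA L (Nat.find hex + 1) := by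
      rw [hh', Finset.sum_range_succ]
    omega

/-! ### The embedding of polynomials -/

lemma coeff_sum {ι : Type*} (s : Finset ι) (f : ι → LS p) (i : ℤ) :
    (∑ j ∈ s, f j).coeff i = ∑ j ∈ s, (f j).coeff i := by
  classical
  induction s using Finset.cons_induction with
  | empty => simp
  | cons a s ha ih => rw [Finset.sum_cons, Finset.sum_cons, HahnSeries.coeff_add, ih]

lemma P2L_C (a : ZMod p) : P2L p (Polynomial.C a) = HahnSeries.single (0 : ℤ) a := by
  have hval : ((a.val : ℕ) : ZMod p) = a := ZMod.natCast_rightInverse a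
  calc P2L p (Polynomial.C a) = P2L p (Polynomial.C ((a.val : ℕ) : ZMod p)) := by rw [hval]
    _ = P2L p ((a.val : ℕ) : Polynomial (ZMod p)) := by rw [Polynomial.C_eq_natCast]
    _ = ((a.val : ℕ) : LS p) := map_natCast _ _
    _ = HahnSeries.C ((a.val : ℕ) : ZMod p) :=
        (map_natCast (HahnSeries.C : ZMod p →+* LS p) _).symm
    _ = HahnSeries.single (0 : ℤ) a := by rw [hval, HahnSeries.C_apply]

lemma P2L_monomial (n : ℕ) (a : ZMod p) :
    P2L p (Polynomial.C a * Polynomial.X ^ n) = HahnSeries.single (-(n : ℤ)) a := by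
  have hx : P2L p (Polynomial.X ^ n) = HahnSeries.single (-(n : ℤ)) 1 := by
    show Polynomial.aeval (Xls p) (Polynomial.X ^ n) = _
    rw [Polynomial.aeval_X_pow, Xls, HahnSeries.single_pow, one_pow]
    congr 1
    simp
  rw [map_mul, P2L_C, hx, HahnSeries.single_mul_single, zero_add, mul_one]

lemma P2L_coeff (B : Polynomial (ZMod p)) (i : ℤ) :
    (P2L p B).coeff i = if i ≤ 0 then B.coeff (-i).toNat else 0 := by
  induction B using Polynomial.induction_on' with
  | add q r hq hr =>
    rw [map_add, HahnSeries.coeff_add, hq, hr, Polynomial.coeff_add]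
    split <;> simp
  | monomial n a =>
    rw [← Polynomial.C_mul_X_pow_eq_monomial, P2L_monomial, HahnSeries.coeff_single,
      Polynomial.coeff_C_mul, Polynomial.coeff_X_pow]
    by_cases h1 : i = -(n : ℤ)
    · rw [if_pos h1, if_pos (show i ≤ 0 by omega), if_pos (show (-i).toNat = n by omega),
        mul_one]
    · rw [if_neg h1]
      by_cases h2 : i ≤ 0
      · rw [if_pos h2, if_neg (show ¬(-i).toNat = n by omega), mul_zero]
      · rw [if_neg h2]

lemma isP_P2L (B : Polynomial (ZMod p)) : IsP (P2L p B) := by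
  intro i hi
  rw [P2L_coeff, if_neg (by omega)]

lemma order_P2L {B : Polynomial (ZMod p)} (hB : B ≠ 0) :
    (P2L p B).order = -(B.natDegree : ℤ) := by
  apply order_eq_of
  · rw [P2L_coeff, if_pos (by omega)]
    have e : ((- -(B.natDegree : ℤ))).toNat = B.natDegree := by omega
    rw [e]
    exact Polynomial.leadingCoeff_ne_zero.mpr hB
  · intro i hi
    rw [P2L_coeff]
    split
    · apply Polynomial.coeff_eq_zero_of_natDegree_lt
      omega
    · rfl

lemma P2L_ne_zero {B : Polynomial (ZMod p)} (hB : B ≠ 0) : P2L p B ≠ 0 := by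
  intro h
  have h2 : (P2L p B).coeff (-(B.natDegree : ℤ)) ≠ 0 := by
    rw [P2L_coeff, if_pos (by omega)]
    have e : ((- -(B.natDegree : ℤ))).toNat = B.natDegree := by omega
    rw [e]
    exact Polynomial.leadingCoeff_ne_zero.mpr hB
  rw [h] at h2
  simp at h2

end Aux

/-- If all partial quotients of `L` have degree at most
`K(L) = sup_{d≥1} deg A_d < ∞` and `B ≠ 0` has degree `e`, then for every `m > K(L)+e-1`
the Hankel vectors `c_j = (a_j, …, a_{j+m-1})`, `1 ≤ j ≤ m-(K(L)+e-1)`, of the Laurent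
coefficients of `BL` are linearly independent over `F_p`. -/
theorem statement1 (p : ℕ) [Fact p.Prime] (L : LS p)
    (hinf : ∀ d : ℕ, 1 ≤ d → 1 ≤ degA L d)
    (KL : ℕ) (hKle : ∀ d : ℕ, 1 ≤ d → degA L d ≤ (KL : ℤ))
    (hKatt : ∃ d : ℕ, 1 ≤ d ∧ degA L d = (KL : ℤ))
    (B : Polynomial (ZMod p)) (hB : B ≠ 0) (e : ℕ) (hBe : B.natDegree = e)
    (m : ℕ) (hm : KL + e - 1 < m) :
    LinearIndependent (ZMod p)
      (fun j : Fin (m - (KL + e - 1)) => fun i : Fin m =>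
        (P2L p B * L).coeff ((j : ℤ) + 1 + (i : ℤ))) := by
  classical
  rw [Fintype.linearIndependent_iff]
  intro g hg j₀
  by_contra hj₀
  have hKL1 : 1 ≤ KL := by
    have h1 := hinf 1 le_rfl
    have h2 := hKle 1 le_rfl
    exact_mod_cast le_trans h1 h2
  -- the polynomial built from the coefficients g
  set H : Polynomial (ZMod p) :=
    ∑ j : Fin (m - (KL + e - 1)), Polynomial.C (g j) * Polynomial.X ^ (j : ℕ) with hH
  have hHcoeff : ∀ j : Fin (m - (KL + e - 1)), H.coeff (j : ℕ) = g j := by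
    intro j
    rw [hH, Polynomial.finset_sum_coeff]
    rw [Finset.sum_eq_single j]
    · rw [Polynomial.coeff_C_mul, Polynomial.coeff_X_pow, if_pos rfl, mul_one]
    · intro b _ hb
      rw [Polynomial.coeff_C_mul, Polynomial.coeff_X_pow, if_neg, mul_zero]
      exact fun hcontra => hb (Fin.ext hcontra.symm)
    · intro hcontra
      exact absurd (Finset.mem_univ j) hcontra
  have hHne : H ≠ 0 := by
    intro h
    apply hj₀
    rw [← hHcoeff j₀, h, Polynomial.coeff_zero]
  have hHdeg : H.natDegree ≤ m - (KL + e - 1) - 1 := by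
    apply Polynomial.natDegree_sum_le_of_forall_le
    intro j _
    refine le_trans (Polynomial.natDegree_C_mul_le _ _) ?_
    rw [Polynomial.natDegree_X_pow]
    have := j.isLt
    omega
  set Qp : Polynomial (ZMod p) := H * B with hQp
  have hQpne : Qp ≠ 0 := mul_ne_zero hHne hB
  have hQdeg : (Qp.natDegree : ℤ) + KL ≤ m := by
    rw [hQp, Polynomial.natDegree_mul hHne hB, hBe]
    have h1 : H.natDegree + e + KL ≤ m := by omega
    push_cast
    omega
  set S : LS p := P2L p B * L with hS
  -- the key coefficient computation
  have hkey : ∀ i : ℤ, 1 ≤ i → i ≤ (m : ℤ) → (P2L p Qp * L).coeff i = 0 := by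
    intro i h1 h2
    have hQL : P2L p Qp * L = ∑ j : Fin (m - (KL + e - 1)),
        HahnSeries.single (-(j : ℕ) : ℤ) (g j) * S := by
      rw [hQp, map_mul, hS, ← Finset.sum_mul, mul_assoc]
      congr 1
      rw [hH, map_sum]
      exact Finset.sum_congr rfl fun j _ => P2L_monomial (j : ℕ) (g j)
    rw [hQL, coeff_sum]
    have hterm : ∀ j : Fin (m - (KL + e - 1)),
        (HahnSeries.single (-(j : ℕ) : ℤ) (g j) * S).coeff i
          = g j * S.coeff (i + (j : ℕ)) := by
      intro j
      have := HahnSeries.coeff_single_mul_add (r := g j) (x := S)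
        (a := i + (j : ℕ)) (b := (-(j : ℕ) : ℤ))
      rw [show i + (j : ℕ) + (-(j : ℕ) : ℤ) = i by ring] at this
      exact this
    rw [Finset.sum_congr rfl fun j _ => hterm j]
    -- use the linear relation hg
    have hi' : (i - 1).toNat < m := by omega
    have happ := congrFun hg ⟨(i - 1).toNat, hi'⟩
    rw [Finset.sum_apply] at happ
    simp only [Pi.smul_apply, smul_eq_mul, Pi.zero_apply] at happ
    rw [← happ]
    apply Finset.sum_congr rfl
    intro j _
    congr 2
    push_cast
    omega
  -- choose the right convergent index
  obtain ⟨h, hh1, hh2⟩ := exists_h hinf KL hKle (Qp.natDegree : ℤ) (by positivity)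
  have hQLP : IsP (P2L p Qp) := isP_P2L Qp
  have hQLne : P2L p Qp ≠ 0 := P2L_ne_zero hQpne
  have hord : -(P2L p Qp).order = (Qp.natDegree : ℤ) := by
    rw [order_P2L hQpne]
    ring
  have happrox := approx hinf hQLP hQLne h (by rw [hord]; exact hh1)
  have hFord1 : 1 ≤ (frac (P2L p Qp * L)).order := one_le_order_frac happrox.1
  have hFordm : (frac (P2L p Qp * L)).order ≤ (m : ℤ) := by
    have := happrox.2
    omega
  have hzero : (frac (P2L p Qp * L)).coeff ((frac (P2L p Qp * L)).order) = 0 := by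
    rw [coeff_frac, if_pos hFord1]
    exact hkey _ hFord1 hFordm
  exact (mt HahnSeries.coeff_order_eq_zero.mp happrox.1) hzero
end KH
end
end

section
/- Let L ∈ F_2((X^{-1})) satisfy L^2 + X^2 L + X = 0 with ν(L) < 0 (where ν denotes the degree valuation). Then the Laurent series expansion of L is L = Σ_{n≥1} X^{-(2^{n+1} - 2^{n-1} - 2)}. -/
open scoped Classical ENNReal
open Polynomial

noncomputable section

namespace KH

lemma sq_coeff (L : LS 2) (i : ℤ) :
    (L ^ 2).coeff i = if Even i then L.coeff (i / 2) else 0 := by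
  have hx : ∀ x : ZMod 2, x * x = x := by decide
  have hadd : ∀ x : ZMod 2, x + x = 0 := by decide
  rw [pow_two, HahnSeries.coeff_mul]
  set s := Finset.antidiagonal L.isPWO_support L.isPWO_support i with hs
  have hsplit : s = s.filter (fun ij => ij.1 = ij.2) ∪ s.filter (fun ij => ¬ ij.1 = ij.2) :=
    (Finset.filter_union_filter_not_eq _ s).symm
  rw [hsplit, Finset.sum_union (Finset.disjoint_filter_filter_not s s _)]
  have h2 : ∑ ij ∈ s.filter (fun ij => ¬ ij.1 = ij.2), L.coeff ij.1 * L.coeff ij.2 = 0 := by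
    refine Finset.sum_involution (fun ij _ => ij.swap) ?_ ?_ ?_ ?_
    · intro ij _; simp only [Prod.fst_swap, Prod.snd_swap]
      rw [mul_comm]; exact hadd _
    · intro ij hij _
      simp only [Finset.mem_filter] at hij
      intro h; exact hij.2 (congrArg Prod.fst h.symm ▸ rfl)
    · intro ij hij
      simp only [Finset.mem_filter, hs, Finset.mem_addAntidiagonal] at hij ⊢
      exact ⟨⟨hij.1.2.1, hij.1.1, by rw [add_comm]; exact hij.1.2.2⟩, fun h => hij.2 h.symm⟩
    · intro ij _; rfl
  rw [h2, add_zero]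
  by_cases he : Even i
  · obtain ⟨k, hk⟩ := he
    have hk2 : i / 2 = k := by omega
    rw [if_pos ⟨k, hk⟩, hk2]
    rw [Finset.sum_eq_single (k, k)]
    · exact hx _
    · intro ij hij hne
      exfalso
      simp only [Finset.mem_filter, hs, Finset.mem_addAntidiagonal] at hij
      apply hne
      have h1 : ij.1 = k := by omega
      have h2 : ij.2 = k := by omega
      exact Prod.ext h1 h2
    · intro h
      by_cases hc : L.coeff k = 0
      · rw [hc, mul_zero]
      · exfalso; apply h
        simp only [Finset.mem_filter, hs, Finset.mem_addAntidiagonal]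
        exact ⟨⟨hc, hc, hk.symm⟩, trivial⟩
  · rw [if_neg he]
    apply Finset.sum_eq_zero
    intro ij hij
    exfalso
    simp only [Finset.mem_filter, hs, Finset.mem_addAntidiagonal] at hij
    exact he ⟨ij.1, by omega⟩

lemma coeff_rec (L : LS 2) (heq : L ^ 2 + (Xls 2) ^ 2 * L + Xls 2 = 0) (i : ℤ) :
    L.coeff i = (if Even i then L.coeff ((i - 2) / 2) else 0)
      + (if i = 1 then 1 else 0) := by
  have h0 := congrArg (fun M : LS 2 => M.coeff (i - 2)) heq
  simp only [HahnSeries.coeff_add, HahnSeries.coeff_zero] at h0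
  have hXsq : (Xls 2) ^ 2 = HahnSeries.single (-2 : ℤ) 1 := by
    rw [pow_two, Xls, HahnSeries.single_mul_single]; norm_num
  have hXL : ((Xls 2) ^ 2 * L).coeff (i - 2) = L.coeff i := by
    rw [hXsq]
    have : i - 2 = i + (-2) := by ring
    rw [this, HahnSeries.coeff_single_mul_add, one_mul]
  have hX : (Xls 2).coeff (i - 2) = if i = 1 then 1 else 0 := by
    rw [Xls, HahnSeries.coeff_single]
    by_cases h : i = 1
    · rw [if_pos (by omega), if_pos h]
    · rw [if_neg (by omega), if_neg h]
  rw [sq_coeff, hXL, hX] at h0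
  have heven : Even (i - 2) ↔ Even i := by
    constructor
    · rintro ⟨k, hk⟩; exact ⟨k + 1, by omega⟩
    · rintro ⟨k, hk⟩; exact ⟨k - 1, by omega⟩
  have hq : ∀ x y z : ZMod 2, x + y + z = 0 → y = x + z := by decide
  simp only [heven] at h0
  exact hq _ _ _ h0

/-- If `L ∈ F_2((X⁻¹))` satisfies `L² + X²L + X = 0` with `ν(L) < 0`, then
its Laurent expansion is `L = ∑_{n ≥ 1} X^{-(2^{n+1} - 2^{n-1} - 2)}`, i.e. the coefficient
of `X^{-i}` is `1` exactly when `i = 2^(m+2) - 2^m - 2` for some `m ≥ 0`. -/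
theorem statement3 (L : LS 2)
    (heq : L ^ 2 + (Xls 2) ^ 2 * L + Xls 2 = 0) (hnu : nu L < 0) :
    ∀ i : ℤ, L.coeff i =
      if ∃ m : ℕ, i = 2 ^ (m + 2) - 2 ^ m - 2 then 1 else 0 := by
  have hf : ∀ m : ℕ, (2:ℤ) ^ (m + 2) - 2 ^ m - 2 = 3 * 2 ^ m - 2 := by
    intro m; rw [pow_add]; ring
  have hp2 : ∀ m : ℕ, (0:ℤ) < 2 ^ m := fun m => pow_pos (by norm_num) m
  have horder : (0:ℤ) < L.order := by unfold nu at hnu; omega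
  have hzero : ∀ i : ℤ, i ≤ 0 → L.coeff i = 0 := fun i hi =>
    HahnSeries.coeff_eq_zero_of_lt_order (by omega)
  have key : ∀ n : ℕ, L.coeff (n : ℤ) =
      if ∃ m : ℕ, (n:ℤ) = 2 ^ (m + 2) - 2 ^ m - 2 then 1 else 0 := by
    intro n
    induction n using Nat.strong_induction_on with
    | _ n ih =>
      match n with
      | 0 =>
        rw [Nat.cast_zero, hzero 0 le_rfl, if_neg]
        rintro ⟨m, hm⟩
        rw [hf m] at hm
        have := hp2 m; omega
      | 1 =>
        rw [Nat.cast_one, coeff_rec L heq, if_neg (by norm_num : ¬ Even (1:ℤ)), if_pos rfl,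
          zero_add, if_pos ⟨0, by norm_num⟩]
      | (n + 2) =>
        have hc : ((n + 2 : ℕ) : ℤ) = (n : ℤ) + 2 := by push_cast; ring
        rw [hc, coeff_rec L heq, if_neg (by omega : ¬ (n:ℤ) + 2 = 1), add_zero]
        by_cases hev : Even ((n:ℤ) + 2)
        · rw [if_pos hev]
          have hne : Even n := by
            rcases hev with ⟨k, hk⟩; exact ⟨k.toNat - 1, by omega⟩
          obtain ⟨k, hk⟩ := hne
          have hdiv : ((n:ℤ) + 2 - 2) / 2 = (k : ℤ) := by omega
          rw [hdiv, ih k (by omega)]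
          have hiff : (∃ m : ℕ, (k:ℤ) = 2 ^ (m + 2) - 2 ^ m - 2) ↔
              (∃ m : ℕ, (n:ℤ) + 2 = 2 ^ (m + 2) - 2 ^ m - 2) := by
            constructor
            · rintro ⟨m, hm⟩
              refine ⟨m + 1, ?_⟩
              rw [hf] at hm ⊢
              rw [pow_succ]
              have := hp2 m; omega
            · rintro ⟨m, hm⟩
              rw [hf] at hm
              match m with
              | 0 => simp at hm; omega
              | m + 1 =>
                refine ⟨m, ?_⟩
                rw [hf]
                rw [pow_succ] at hm
                have := hp2 m; omega
          rw [if_congr hiff rfl rfl]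
        · rw [if_neg hev, if_neg]
          rintro ⟨m, hm⟩
          rw [hf] at hm
          match m with
          | 0 => simp at hm; omega
          | m + 1 =>
            apply hev
            rw [pow_succ] at hm
            rw [Int.even_iff]
            have := hp2 m; omega
  intro i
  rcases le_or_gt i 0 with hi | hi
  · rw [hzero i hi, if_neg]
    rintro ⟨m, hm⟩
    rw [hf m] at hm
    have := hp2 m; omega
  · have : i = ((i.toNat : ℕ) : ℤ) := by omega
    rw [this]; exact key i.toNat


end KH
end
end

section
/- Let H be the set of formal Laurent series in F_p((X^{-1})) with negative degree (ν(L) < 0), identified with the product space Π_{i≥1} F_p via coefficients, equipped with the Haar (uniform product) measure h. For any nonzero polynomial B ∈ F_p[X], the map f: H → H, L ↦ {B·L} (fractional part of B times L) is measure preserving. -/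
open scoped Classical ENNReal
open Polynomial

noncomputable section

namespace KH

section Statement8Aux

open MeasureTheory

variable {p : ℕ}

lemma measurableSet_zmod (s : Set (ZMod p)) : MeasurableSet s :=
  MeasurableSpace.measurableSet_top

instance : MeasurableSingletonClass (ZMod p) :=
  ⟨fun _ => measurableSet_zmod _⟩

/-- A cylinder set in `ℕ → ZMod p`. -/
def Cyl (p : ℕ) (m : ℕ) (v : Fin m → ZMod p) : Set (ℕ → ZMod p) :=
  {a | ∀ i : Fin m, a (i : ℕ) = v i}

lemma measurableSet_cyl (m : ℕ) (v : Fin m → ZMod p) : MeasurableSet (Cyl p m v) := by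
  have h : Cyl p m v = ⋂ i : Fin m, (fun a : ℕ → ZMod p => a (i : ℕ)) ⁻¹' {v i} := by
    ext a; simp [Cyl]
  rw [h]
  exact MeasurableSet.iInter fun i => (measurable_pi_apply _) (measurableSet_zmod _)

/-- The collection of all cylinder sets. -/
def CylSet (p : ℕ) : Set (Set (ℕ → ZMod p)) := {s | ∃ m v, s = Cyl p m v}

lemma isPiSystem_cylSet : IsPiSystem (CylSet p) := by
  rintro s ⟨m, v, rfl⟩ t ⟨m', v', rfl⟩ hne
  obtain ⟨a, ha, ha'⟩ := hne
  rcases le_total m m' with h | h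
  · refine ⟨m', v', ?_⟩
    apply Set.Subset.antisymm Set.inter_subset_right
    intro b hb
    refine ⟨fun i => ?_, hb⟩
    have hi : (i : ℕ) < m' := lt_of_lt_of_le i.2 h
    calc b (i : ℕ) = v' ⟨i, hi⟩ := hb ⟨i, hi⟩
      _ = a (i : ℕ) := (ha' ⟨i, hi⟩).symm
      _ = v i := ha i
  · refine ⟨m, v, ?_⟩
    apply Set.Subset.antisymm Set.inter_subset_left
    intro b hb
    refine ⟨hb, fun i => ?_⟩
    have hi : (i : ℕ) < m := lt_of_lt_of_le i.2 h
    calc b (i : ℕ) = v ⟨i, hi⟩ := hb ⟨i, hi⟩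
      _ = a (i : ℕ) := (ha ⟨i, hi⟩).symm
      _ = v' i := ha' i

lemma generateFrom_cylSet [NeZero p] :
    (MeasurableSpace.pi : MeasurableSpace (ℕ → ZMod p)) =
      MeasurableSpace.generateFrom (CylSet p) := by
  apply le_antisymm
  · have hev : ∀ i : ℕ, Measurable[MeasurableSpace.generateFrom (CylSet p)]
        (fun a : ℕ → ZMod p => a i) := by
      intro i s _
      have h : (fun a : ℕ → ZMod p => a i) ⁻¹' s =
          ⋃ (v : Fin (i + 1) → ZMod p) (_ : v ⟨i, Nat.lt_succ_self i⟩ ∈ s),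
            Cyl p (i + 1) v := by
        ext a
        constructor
        · intro ha
          exact Set.mem_iUnion₂.2 ⟨fun j => a (j : ℕ), ha, fun j => rfl⟩
        · intro ha
          obtain ⟨v, hv, hav⟩ := Set.mem_iUnion₂.1 ha
          have h2 := hav ⟨i, Nat.lt_succ_self i⟩
          show a i ∈ s
          rw [h2]; exact hv
      rw [h]
      exact MeasurableSet.iUnion fun v => MeasurableSet.iUnion fun _ =>
        MeasurableSpace.measurableSet_generateFrom ⟨_, _, rfl⟩
    have hid : @Measurable (ℕ → ZMod p) (ℕ → ZMod p)
        (MeasurableSpace.generateFrom (CylSet p)) MeasurableSpace.pi id :=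
      (@measurable_pi_iff (ℕ → ZMod p) ℕ (fun _ => ZMod p)
        (MeasurableSpace.generateFrom (CylSet p)) _ id).2 hev
    intro s hs
    exact hid hs
  · exact MeasurableSpace.generateFrom_le (by
      rintro s ⟨m, v, rfl⟩; exact measurableSet_cyl m v)

/-- The shifted convolution map: coordinate functions of `a ↦ {B · toLS a}`. -/
def mulShift [Fact p.Prime] (B : Polynomial (ZMod p)) (a : ℕ → ZMod p) (i : ℕ) : ZMod p :=
  ∑ j ∈ Finset.range (B.natDegree + 1), B.coeff j * a (i + j)

lemma coeff_mul_toLS [Fact p.Prime] (B : Polynomial (ZMod p)) (a : ℕ → ZMod p) (i : ℕ) :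
    (P2L p B * toLS p a).coeff ((i : ℤ) + 1) = mulShift B a i := by
  have hsum : ∀ (s : Finset ℕ) (f : ℕ → LS p) (k : ℤ),
      (∑ j ∈ s, f j).coeff k = ∑ j ∈ s, (f j).coeff k := fun s f k =>
    map_sum (HahnSeries.coeff.addMonoidHom k) f s
  have h0 : P2L p B = Polynomial.aeval (Xls p) B := rfl
  rw [h0, Polynomial.aeval_eq_sum_range, Finset.sum_mul, hsum, mulShift]
  refine Finset.sum_congr rfl fun j hj => ?_
  have hx : (Xls p) ^ j = HahnSeries.single (-(j : ℤ)) (1 : ZMod p) := by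
    rw [Xls, HahnSeries.single_pow]
    simp
  have halg : (algebraMap (ZMod p) (LS p)) (B.coeff j) =
      HahnSeries.single (0 : ℤ) (B.coeff j) := by
    rw [HahnSeries.algebraMap_apply', PowerSeries.algebraMap_apply, Algebra.algebraMap_self,
      RingHom.id_apply, HahnSeries.ofPowerSeries_C, HahnSeries.C_apply]
  rw [Algebra.smul_def, mul_assoc, halg, HahnSeries.coeff_single_zero_mul, hx]
  have key : (HahnSeries.single (-(j : ℤ)) (1 : ZMod p) * toLS p a).coeff ((i : ℤ) + 1) =
      (toLS p a).coeff ((i : ℤ) + 1 + j) := by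
    have h3 := HahnSeries.coeff_single_mul_add (r := (1 : ZMod p)) (x := toLS p a)
      (a := (i : ℤ) + 1 + j) (b := -(j : ℤ))
    rw [show (i : ℤ) + 1 + j + -(j : ℤ) = (i : ℤ) + 1 by ring] at h3
    rw [h3, one_mul]
  rw [key]
  have h1 : (1 : ℤ) ≤ (i : ℤ) + 1 + j := by omega
  have h4 : (toLS p a).coeff ((i : ℤ) + 1 + j) =
      if _ : (1 : ℤ) ≤ (i : ℤ) + 1 + j then a ((i : ℤ) + 1 + j - 1).toNat else 0 := rfl
  rw [h4, dif_pos h1]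
  have h5 : ((i : ℤ) + 1 + (j : ℤ) - 1).toNat = i + j := by omega
  rw [h5]

lemma measurable_mulShift [Fact p.Prime] (B : Polynomial (ZMod p)) :
    Measurable (fun a : ℕ → ZMod p => fun i : ℕ => mulShift B a i) := by
  haveI : NeZero p := ⟨(Fact.out : p.Prime).pos.ne'⟩
  refine measurable_pi_lambda _ fun i => ?_
  have hφ : Measurable (fun a : ℕ → ZMod p => fun j : Fin (B.natDegree + 1) => a (i + (j : ℕ))) :=
    measurable_pi_lambda _ fun j => measurable_pi_apply _
  have hψ : Measurable (fun x : Fin (B.natDegree + 1) → ZMod p =>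
      ∑ j : Fin (B.natDegree + 1), B.coeff (j : ℕ) * x j) := measurable_of_countable _
  have heq : (fun a : ℕ → ZMod p => mulShift B a i) =
      (fun x : Fin (B.natDegree + 1) → ZMod p =>
        ∑ j : Fin (B.natDegree + 1), B.coeff (j : ℕ) * x j) ∘
        fun a : ℕ → ZMod p => fun j : Fin (B.natDegree + 1) => a (i + (j : ℕ)) := by
    funext a
    rw [Function.comp_apply, mulShift, ← Fin.sum_univ_eq_sum_range fun j => B.coeff j * a (i + j)]
  rw [heq]
  exact hψ.comp hφ

/-- Extension of a `Fin m`-indexed tuple to `ℕ` by `0`. -/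
def extFin {α : Type*} [Zero α] (m : ℕ) (v : Fin m → α) : ℕ → α :=
  fun n => if h : n < m then v ⟨n, h⟩ else 0

/-- The unique solution of the triangular linear system, by strong recursion. -/
def solveB [Fact p.Prime] (B : Polynomial (ZMod p)) (v w : ℕ → ZMod p) : ℕ → ZMod p
  | k =>
    if h : k < B.natDegree then w k
    else
      B.leadingCoeff⁻¹ * (v (k - B.natDegree) -
        ∑ j ∈ (Finset.range B.natDegree).attach,
          B.coeff j * solveB B v w (k - B.natDegree + (j : ℕ)))
  termination_by k => k
  decreasing_by
    have hj := j.2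
    simp only [Finset.mem_range] at hj
    omega

lemma solveB_lt [Fact p.Prime] (B : Polynomial (ZMod p)) (v w : ℕ → ZMod p) {k : ℕ}
    (h : k < B.natDegree) : solveB B v w k = w k := by
  rw [solveB, dif_pos h]

lemma solveB_ge [Fact p.Prime] (B : Polynomial (ZMod p)) (v w : ℕ → ZMod p) {k : ℕ}
    (h : ¬ k < B.natDegree) :
    solveB B v w k = B.leadingCoeff⁻¹ * (v (k - B.natDegree) -
      ∑ j ∈ Finset.range B.natDegree,
        B.coeff j * solveB B v w (k - B.natDegree + j)) := by
  rw [solveB, dif_neg h, ← Finset.sum_attach (Finset.range B.natDegree)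
    (fun j => B.coeff j * solveB B v w (k - B.natDegree + j))]

lemma solveB_key [Fact p.Prime] (B : Polynomial (ZMod p)) (hB : B ≠ 0) (v w : ℕ → ZMod p) {k : ℕ}
    (h : ¬ k < B.natDegree) :
    B.leadingCoeff * solveB B v w k +
      ∑ j ∈ Finset.range B.natDegree,
        B.coeff j * solveB B v w (k - B.natDegree + j) = v (k - B.natDegree) := by
  have hc : B.leadingCoeff ≠ 0 := Polynomial.leadingCoeff_ne_zero.mpr hB
  rw [solveB_ge B v w h, ← mul_assoc, mul_inv_cancel₀ hc, one_mul, sub_add_cancel]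

lemma solveB_of_eqs [Fact p.Prime] (B : Polynomial (ZMod p)) (hB : B ≠ 0) {m : ℕ}
    (v : Fin m → ZMod p) (a : ℕ → ZMod p)
    (ha : ∀ i : Fin m, mulShift B a (i : ℕ) = v i)
    {k : ℕ} (hk : k < m + B.natDegree) :
    a k = solveB B (extFin m v) (extFin B.natDegree fun n : Fin B.natDegree => a (n : ℕ)) k := by
  have hc : B.leadingCoeff ≠ 0 := Polynomial.leadingCoeff_ne_zero.mpr hB
  revert hk
  induction k using Nat.strong_induction_on with
  | _ k ih =>
    intro hk
    by_cases hkd : k < B.natDegree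
    · rw [solveB_lt _ _ _ hkd]
      rw [extFin, dif_pos hkd]
    · have him : k - B.natDegree < m := by omega
      have hkey := solveB_key B hB (extFin m v)
        (extFin B.natDegree fun n : Fin B.natDegree => a (n : ℕ)) hkd
      have hsum : ∑ j ∈ Finset.range B.natDegree, B.coeff j *
            solveB B (extFin m v)
              (extFin B.natDegree fun n : Fin B.natDegree => a (n : ℕ))
              (k - B.natDegree + j)
          = ∑ j ∈ Finset.range B.natDegree, B.coeff j * a (k - B.natDegree + j) := by
        refine Finset.sum_congr rfl fun j hj => ?_
        rw [Finset.mem_range] at hj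
        rw [← ih (k - B.natDegree + j) (by omega) (by omega)]
      rw [hsum] at hkey
      have hVi : extFin m v (k - B.natDegree) = mulShift B a (k - B.natDegree) := by
        rw [extFin, dif_pos him]
        exact (ha ⟨k - B.natDegree, him⟩).symm
      have hga : mulShift B a (k - B.natDegree) =
          (∑ j ∈ Finset.range B.natDegree, B.coeff j * a (k - B.natDegree + j))
            + B.leadingCoeff * a k := by
        rw [mulShift, Finset.sum_range_succ, Polynomial.coeff_natDegree,
          show k - B.natDegree + B.natDegree = k from by omega]
      rw [hVi, hga] at hkey
      have h3 : B.leadingCoeff * a k = B.leadingCoeff *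
          solveB B (extFin m v)
            (extFin B.natDegree fun n : Fin B.natDegree => a (n : ℕ)) k := by
        linear_combination -hkey
      exact mul_left_cancel₀ hc h3

lemma eqs_of_solveB [Fact p.Prime] (B : Polynomial (ZMod p)) (hB : B ≠ 0) {m : ℕ}
    (v : Fin m → ZMod p) (w : Fin B.natDegree → ZMod p) (a : ℕ → ZMod p)
    (ha : ∀ k : Fin (m + B.natDegree), a (k : ℕ) =
      solveB B (extFin m v) (extFin B.natDegree w) (k : ℕ))
    (i : Fin m) : mulShift B a (i : ℕ) = v i := by
  have h1 : ¬ ((i : ℕ) + B.natDegree < B.natDegree) := by omega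
  have hkey := solveB_key B hB (extFin m v) (extFin B.natDegree w) h1
  simp only [Nat.add_sub_cancel] at hkey
  have hsub : ∀ j, j < B.natDegree + 1 → a ((i : ℕ) + j)
      = solveB B (extFin m v) (extFin B.natDegree w) ((i : ℕ) + j) := by
    intro j hj
    have := i.2
    exact ha ⟨(i : ℕ) + j, by omega⟩
  have hs1 : ∑ j ∈ Finset.range B.natDegree, B.coeff j * a ((i : ℕ) + j)
      = ∑ j ∈ Finset.range B.natDegree, B.coeff j *
          solveB B (extFin m v) (extFin B.natDegree w) ((i : ℕ) + j) :=
    Finset.sum_congr rfl fun j hj => by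
      rw [hsub j (by have := Finset.mem_range.mp hj; omega)]
  rw [mulShift, Finset.sum_range_succ, hs1, hsub B.natDegree (Nat.lt_succ_self _),
    Polynomial.coeff_natDegree]
  have hVi : extFin m v (i : ℕ) = v i := by
    rw [extFin, dif_pos i.2]
  rw [← hVi, ← hkey]
  ring

lemma preimage_cyl [Fact p.Prime] (B : Polynomial (ZMod p)) (hB : B ≠ 0) (m : ℕ)
    (v : Fin m → ZMod p) :
    (fun a : ℕ → ZMod p => fun i : ℕ => mulShift B a i) ⁻¹' Cyl p m v =
      ⋃ w : Fin B.natDegree → ZMod p,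
        Cyl p (m + B.natDegree) fun k =>
          solveB B (extFin m v) (extFin B.natDegree w) (k : ℕ) := by
  ext a
  simp only [Set.mem_preimage, Set.mem_iUnion]
  constructor
  · intro ha
    exact ⟨fun n : Fin B.natDegree => a (n : ℕ),
      fun k => solveB_of_eqs B hB v a ha k.2⟩
  · rintro ⟨w, hw⟩
    exact fun i => eqs_of_solveB B hB v w a hw i

lemma cyl_solveB_disjoint [Fact p.Prime] (B : Polynomial (ZMod p)) {m : ℕ}
    (v : Fin m → ZMod p) :
    Pairwise (Function.onFun Disjoint fun w : Fin B.natDegree → ZMod p =>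
      Cyl p (m + B.natDegree) fun k =>
        solveB B (extFin m v) (extFin B.natDegree w) (k : ℕ)) := by
  intro w w' hne
  rw [Function.onFun, Set.disjoint_left]
  intro a ha ha'
  apply hne
  funext k
  have h1 := ha ⟨(k : ℕ), by omega⟩
  have h2 := ha' ⟨(k : ℕ), by omega⟩
  have e1 : solveB B (extFin m v) (extFin B.natDegree w) (k : ℕ) = w k := by
    rw [solveB_lt _ _ _ k.2, extFin, dif_pos k.2]
  have e2 : solveB B (extFin m v) (extFin B.natDegree w') (k : ℕ) = w' k := by
    rw [solveB_lt _ _ _ k.2, extFin, dif_pos k.2]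
  calc w k = solveB B (extFin m v) (extFin B.natDegree w) (k : ℕ) := e1.symm
    _ = a (k : ℕ) := h1.symm
    _ = solveB B (extFin m v) (extFin B.natDegree w') (k : ℕ) := h2
    _ = w' k := e2

end Statement8Aux


open MeasureTheory in
/-- Under the Haar (uniform product) measure on `H ≅ Π_{i≥1} F_p`,
the map `L ↦ {B·L}` (in coordinates: `a ↦` coefficients of the fractional part of
`B(X)·(∑_{i≥1} a_{i-1} X^{-i})`) is measure preserving, for any nonzero `B ∈ F_p[X]`. -/
theorem statement8 (p : ℕ) [Fact p.Prime]
    (μ : Measure (ℕ → ZMod p)) [IsProbabilityMeasure μ]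
    (hμ : ∀ (m : ℕ) (v : Fin m → ZMod p),
      μ {a | ∀ i : Fin m, a (i : ℕ) = v i} = ((p : ℝ≥0∞))⁻¹ ^ m)
    (B : Polynomial (ZMod p)) (hB : B ≠ 0) :
    MeasurePreserving
      (fun a : ℕ → ZMod p => fun i : ℕ => (P2L p B * toLS p a).coeff ((i : ℤ) + 1))
      μ μ := by
  classical
  haveI : NeZero p := ⟨(Fact.out : p.Prime).pos.ne'⟩
  have hfg : (fun a : ℕ → ZMod p => fun i : ℕ => (P2L p B * toLS p a).coeff ((i : ℤ) + 1))
      = fun a : ℕ → ZMod p => fun i : ℕ => mulShift B a i :=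
    funext fun a => funext fun i => coeff_mul_toLS B a i
  rw [hfg]
  have hg : Measurable (fun a : ℕ → ZMod p => fun i : ℕ => mulShift B a i) :=
    measurable_mulShift B
  refine ⟨hg, ?_⟩
  haveI : IsProbabilityMeasure (μ.map (fun a : ℕ → ZMod p => fun i : ℕ => mulShift B a i)) :=
    Measure.isProbabilityMeasure_map hg.aemeasurable
  have hp0 : (p : ℝ≥0∞) ≠ 0 := Nat.cast_ne_zero.mpr (Fact.out : p.Prime).pos.ne'
  have hpt : (p : ℝ≥0∞) ≠ ⊤ := ENNReal.natCast_ne_top p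
  refine ext_of_generate_finite (CylSet p) generateFrom_cylSet isPiSystem_cylSet ?_ ?_
  · rintro s ⟨m, v, rfl⟩
    rw [Measure.map_apply hg (measurableSet_cyl m v), preimage_cyl B hB m v,
      measure_iUnion (cyl_solveB_disjoint B v) (fun w => measurableSet_cyl _ _)]
    have hμc : ∀ w : Fin B.natDegree → ZMod p,
        μ (Cyl p (m + B.natDegree) fun k =>
          solveB B (extFin m v) (extFin B.natDegree w) (k : ℕ)) =
        ((p : ℝ≥0∞))⁻¹ ^ (m + B.natDegree) := fun w => hμ (m + B.natDegree) _
    rw [tsum_congr hμc, tsum_fintype, Finset.sum_const,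
      Finset.card_univ, Fintype.card_fun, ZMod.card, Fintype.card_fin]
    have hcyl : μ (Cyl p m v) = ((p : ℝ≥0∞))⁻¹ ^ m := hμ m v
    rw [hcyl, nsmul_eq_mul, Nat.cast_pow]
    calc (p : ℝ≥0∞) ^ B.natDegree * ((p : ℝ≥0∞))⁻¹ ^ (m + B.natDegree)
        = ((p : ℝ≥0∞) * ((p : ℝ≥0∞))⁻¹) ^ B.natDegree * ((p : ℝ≥0∞))⁻¹ ^ m := by
          rw [pow_add, mul_pow]; ring
      _ = ((p : ℝ≥0∞))⁻¹ ^ m := by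
          rw [ENNReal.mul_inv_cancel hp0 hpt, one_pow, one_mul]
  · simp [measure_univ]


end KH
end
end
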